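/- For every continuous distribution function F and distribution function K on (0,1), the joint distribution of the ranks of Y_1,...,Y_n in the combined sample under the alternative (F, K∘F) equals the joint distribution of the ranks under the alternative (U, K), where U is the uniform distribution on (0,1). In particular the distribution of any rank statistic T = Σ k(R_j) under (F, K∘F) does not depend on F. -/

import Mathlib

open MeasureTheory Set Filter

/-- The rank of the `i`-th coordinate among `x 0, ..., x (N-1)`. -/
noncomputable def rank {N : ℕ} (x : Fin N → ℝ) (i : Fin N) : ℕ :=
  (Finset.univ.filter fun j => x j ≤ x i).card

section Helpers

lemma rank_measurable' {N : ℕ} (i : Fin N) :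
    Measurable (fun x : Fin N → ℝ => rank x i) := by
  have : (fun x : Fin N → ℝ => rank x i)
      = fun x => ∑ j : Fin N, if x j ≤ x i then 1 else 0 := by
    funext x; rw [rank, Finset.card_filter]
  rw [this]
  exact Finset.measurable_sum _ fun j _ =>
    Measurable.ite (measurableSet_le (measurable_pi_apply j) (measurable_pi_apply i))
      measurable_const measurable_const

lemma rank_invariance {N : ℕ} (x y : Fin N → ℝ)
    (hmono : ∀ i j, x i ≤ x j → y i ≤ y j)
    (hdist : ∀ i j, i ≠ j → y i ≠ y j) (i : Fin N) :
    rank y i = rank x i := by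
  rw [rank, rank]
  congr 1
  apply Finset.filter_congr
  intro j _
  constructor
  · intro h
    by_cases hji : j = i
    · subst hji; exact le_refl _
    · by_contra hx
      have : x i ≤ x j := le_of_not_ge hx
      have := hmono i j this
      have hne := hdist j i hji
      exact hne (le_antisymm h this)
  · exact hmono j i

lemma singleton_zero_of_cdf (μ : Measure ℝ) [IsProbabilityMeasure μ] (g : ℝ → ℝ)
    (hg : Continuous g) (hg0 : ∀ x, 0 ≤ g x)
    (h : ∀ x, μ (Iic x) = ENNReal.ofReal (g x)) (a : ℝ) : μ {a} = 0 := by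
  have key : ∀ ε : ℝ, 0 < ε → μ {a} ≤ ENNReal.ofReal ε := by
    intro ε hε
    have hc : ContinuousAt g a := hg.continuousAt
    rw [Metric.continuousAt_iff] at hc
    obtain ⟨δ, hδ, hδ'⟩ := hc ε hε
    have hd : dist (a - δ/2) a < δ := by
      rw [Real.dist_eq]; rw [abs_of_nonpos] <;> [skip; linarith]; linarith
    have h1 : |g (a - δ/2) - g a| < ε := by
      have := hδ' hd; rwa [Real.dist_eq] at this
    have h2 : g a - g (a - δ/2) < ε := by
      rcases abs_lt.mp h1 with ⟨l, r⟩; linarith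
    have hsub : {a} ⊆ Iic a \ Iic (a - δ/2) := by
      intro x hx; simp only [mem_singleton_iff] at hx; subst hx
      constructor
      · exact mem_Iic.mpr le_rfl
      · simp only [mem_Iic, not_le]; linarith
    calc μ {a} ≤ μ (Iic a \ Iic (a - δ/2)) := measure_mono hsub
      _ = μ (Iic a) - μ (Iic (a - δ/2)) := by
          apply measure_diff (Iic_subset_Iic.mpr (by linarith)) measurableSet_Iic.nullMeasurableSet
          exact measure_ne_top μ _
      _ = ENNReal.ofReal (g a) - ENNReal.ofReal (g (a - δ/2)) := by rw [h, h]
      _ = ENNReal.ofReal (g a - g (a - δ/2)) := (ENNReal.ofReal_sub _ (hg0 _)).symm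
      _ ≤ ENNReal.ofReal ε := ENNReal.ofReal_le_ofReal h2.le
  have : μ {a} ≤ 0 := by
    refine ENNReal.le_of_forall_pos_le_add fun ε hε _ => ?_
    rw [zero_add]
    calc μ {a} ≤ ENNReal.ofReal (ε : ℝ) := key _ (by exact_mod_cast hε)
      _ = ε := ENNReal.ofReal_coe_nnreal
  exact le_antisymm this zero_le

lemma prob_eq_zero_of_indep {Ω : Type*} [MeasurableSpace Ω] (μ : Measure Ω)
    [IsProbabilityMeasure μ] (A B : Ω → ℝ) (hA : Measurable A) (hB : Measurable B)
    (hind : ProbabilityTheory.IndepFun A B μ) (hBsing : ∀ a, μ.map B {a} = 0) :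
    μ {ω | A ω = B ω} = 0 := by
  have hpair : Measurable fun ω => (A ω, B ω) := hA.prodMk hB
  have hdiag : MeasurableSet (Set.diagonal ℝ) := (isClosed_diagonal (X := ℝ)).measurableSet
  have hmap := (ProbabilityTheory.indepFun_iff_map_prod_eq_prod_map_map
    hA.aemeasurable hB.aemeasurable).mp hind
  have : {ω | A ω = B ω} = (fun ω => (A ω, B ω)) ⁻¹' Set.diagonal ℝ := by
    ext ω; simp [Set.diagonal]
  rw [this, ← Measure.map_apply hpair hdiag, hmap]
  haveI : IsProbabilityMeasure (μ.map A) := Measure.isProbabilityMeasure_map hA.aemeasurable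
  haveI : IsProbabilityMeasure (μ.map B) := Measure.isProbabilityMeasure_map hB.aemeasurable
  rw [Measure.prod_apply hdiag]
  have : ∀ a : ℝ, (μ.map B) (Prod.mk a ⁻¹' Set.diagonal ℝ) = 0 := by
    intro a
    have : Prod.mk a ⁻¹' Set.diagonal ℝ = {a} := by ext x; simp [Set.diagonal, eq_comm]
    rw [this]; exact hBsing a
  simp only [this, lintegral_zero]

lemma key_cdf {Ω : Type*} [MeasurableSpace Ω] (μ : Measure Ω) [IsProbabilityMeasure μ]
    (F L : ℝ → ℝ) (hFmono : Monotone F) (hFcont : Continuous F)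
    (hFbot : Tendsto F atBot (nhds 0)) (hFtop : Tendsto F atTop (nhds 1))
    (hL0 : L 0 = 0) (hL1 : L 1 = 1)
    (A : Ω → ℝ) (hA : ∀ t, μ {ω | A ω ≤ t} = ENNReal.ofReal (L (F t))) (x : ℝ) :
    μ {ω | F (A ω) ≤ x} = ENNReal.ofReal (L (max 0 (min x 1))) := by
  have hF0 : ∀ t, 0 ≤ F t := by
    intro t
    have : ∀ᶠ s in atBot, F s ≤ F t := eventually_atBot.mpr ⟨t, fun s hs => hFmono hs⟩
    exact le_of_tendsto hFbot this
  have hF1 : ∀ t, F t ≤ 1 := by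
    intro t
    have : ∀ᶠ s in atTop, F t ≤ F s := eventually_atTop.mpr ⟨t, fun s hs => hFmono hs⟩
    exact ge_of_tendsto hFtop this
  rcases lt_or_ge x 0 with hx | hx
  · have he : {ω | F (A ω) ≤ x} = ∅ := by
      ext ω; simp only [mem_setOf_eq, mem_empty_iff_false, iff_false, not_le]
      exact lt_of_lt_of_le hx (hF0 _)
    rw [he, measure_empty]
    have : max 0 (min x 1) = 0 := by
      rw [min_eq_left (by linarith), max_eq_left hx.le]
    rw [this, hL0, ENNReal.ofReal_zero]
  rcases le_or_gt 1 x with hx1 | hx1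
  · have he : {ω | F (A ω) ≤ x} = univ := by
      ext ω; simp only [mem_setOf_eq, mem_univ, iff_true]
      exact le_trans (hF1 _) hx1
    rw [he, measure_univ]
    have : max 0 (min x 1) = 1 := by
      rw [min_eq_right hx1, max_eq_right zero_le_one]
    rw [this, hL1, ENNReal.ofReal_one]
  · have hclamp : max 0 (min x 1) = x := by
      rw [min_eq_left hx1.le, max_eq_right hx]
    rw [hclamp]
    set S : Set ℝ := {t | F t ≤ x} with hS
    rcases eq_empty_or_nonempty S with hSe | hSne
    · have he : {ω | F (A ω) ≤ x} = ∅ := by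
        ext ω; simp only [mem_setOf_eq, mem_empty_iff_false, iff_false]
        intro h
        have hmem : A ω ∈ S := h
        rw [hSe] at hmem
        exact notMem_empty _ hmem
      rw [he, measure_empty]
      rcases eq_or_lt_of_le hx with hx0 | hx0
      · rw [← hx0, hL0, ENNReal.ofReal_zero]
      · exfalso
        obtain ⟨t, ht⟩ : ∃ t, F t < x := by
          have := hFbot.eventually (eventually_lt_nhds hx0)
          rcases this.exists with ⟨t, ht⟩; exact ⟨t, ht⟩
        have htS : t ∈ S := le_of_lt ht
        rw [hSe] at htS
        exact notMem_empty t htS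
    · have hSbdd : BddAbove S := by
        obtain ⟨T, hT⟩ : ∃ T, x < F T := by
          have := hFtop.eventually (eventually_gt_nhds hx1)
          rcases this.exists with ⟨T, hT⟩; exact ⟨T, hT⟩
        refine ⟨T, fun t ht => ?_⟩
        by_contra hc
        push_neg at hc
        exact absurd (lt_of_le_of_lt ht hT) (not_lt.mpr (hFmono hc.le))
      have hSclosed : IsClosed S := isClosed_le hFcont continuous_const
      set c := sSup S with hc
      have hcS : c ∈ S := hSclosed.csSup_mem hSne hSbdd
      have hFc : F c ≤ x := hcS
      have hFcx : F c = x := by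
        rcases eq_or_lt_of_le hFc with h | h
        · exact h
        · exfalso
          obtain ⟨T, hT⟩ : ∃ T, x < F T := by
            have := hFtop.eventually (eventually_gt_nhds hx1)
            rcases this.exists with ⟨T, hT⟩; exact ⟨T, hT⟩
          have hcT : c ≤ T := by
            by_contra hcT
            push_neg at hcT
            exact absurd (lt_trans h hT) (not_lt.mpr (hFmono hcT.le))
          obtain ⟨t, htmem, htval⟩ := intermediate_value_Icc hcT hFcont.continuousOn
            (show x ∈ Icc (F c) (F T) from ⟨h.le, hT.le⟩)
          have htS : t ∈ S := le_of_eq htval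
          have htc : t ≤ c := le_csSup hSbdd htS
          have hxc : x ≤ F c := htval ▸ hFmono htc
          exact absurd h (not_lt.mpr hxc)
      have he : {ω | F (A ω) ≤ x} = {ω | A ω ≤ c} := by
        ext ω
        simp only [mem_setOf_eq]
        constructor
        · intro h; exact le_csSup hSbdd h
        · intro h; exact le_trans (hFmono h) hFc
      rw [he, hA, hFcx]

lemma joint_law_eq {Ω Ω' : Type*} [MeasurableSpace Ω] [MeasurableSpace Ω']
    (P : Measure Ω) [IsProbabilityMeasure P] (Q : Measure Ω') [IsProbabilityMeasure Q]
    (N : ℕ) (V : Fin N → Ω → ℝ) (W : Fin N → Ω' → ℝ)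
    (hV : ∀ i, Measurable (V i)) (hW : ∀ i, Measurable (W i))
    (hVind : ProbabilityTheory.iIndepFun (m := fun _ : Fin N => (inferInstance : MeasurableSpace ℝ)) V P)
    (hWind : ProbabilityTheory.iIndepFun (m := fun _ : Fin N => (inferInstance : MeasurableSpace ℝ)) W Q)
    (hmarg : ∀ i x, P {ω | V i ω ≤ x} = Q {ω | W i ω ≤ x}) :
    P.map (fun ω i => V i ω) = Q.map (fun ω i => W i ω) := by
  have hVm : Measurable (fun ω i => V i ω) := measurable_pi_lambda _ hV
  have hWm : Measurable (fun ω i => W i ω) := measurable_pi_lambda _ hW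
  haveI : IsProbabilityMeasure (P.map (fun ω i => V i ω)) :=
    Measure.isProbabilityMeasure_map hVm.aemeasurable
  haveI : IsProbabilityMeasure (Q.map (fun ω i => W i ω)) :=
    Measure.isProbabilityMeasure_map hWm.aemeasurable
  set C : Set (Set (Fin N → ℝ)) :=
    pi univ '' pi univ (fun _ : Fin N => range Iic) with hC
  have hspan : ∀ i : Fin N, IsCountablySpanning (range (Iic : ℝ → Set ℝ)) := by
    intro _
    refine ⟨fun n => Iic (n : ℝ), fun n => ⟨n, rfl⟩, ?_⟩
    ext x
    simp only [mem_iUnion, mem_Iic, mem_univ, iff_true]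
    exact exists_nat_ge x
  have hgen : (inferInstance : MeasurableSpace (Fin N → ℝ)) = MeasurableSpace.generateFrom C := by
    rw [hC]
    exact (generateFrom_eq_pi (fun _ => ((borel_eq_generateFrom_Iic ℝ).symm.trans
      BorelSpace.measurable_eq.symm)) hspan).symm
  have hpi : IsPiSystem C := by
    rintro s ⟨f, hf, rfl⟩ t ⟨g, hg, rfl⟩ -
    choose a ha using fun i => hf i (mem_univ i)
    choose b hb using fun i => hg i (mem_univ i)
    refine ⟨fun i => Iic (min (a i) (b i)), fun i _ => ⟨min (a i) (b i), rfl⟩, ?_⟩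
    rw [← pi_inter_distrib]
    exact Set.pi_congr rfl fun i _ => by rw [← ha i, ← hb i, Iic_inter_Iic]
  refine ext_of_generate_finite C hgen hpi ?_ (by simp)
  rintro s ⟨f, hf, rfl⟩
  choose a ha using fun i => hf i (mem_univ i)
  have hfeq : (fun i => Iic (a i)) = f := funext ha
  subst hfeq
  have hmeas : MeasurableSet (univ.pi fun i => Iic (a i)) :=
    MeasurableSet.univ_pi fun i => measurableSet_Iic
  have hpreV : (fun ω i => V i ω) ⁻¹' (univ.pi fun i => Iic (a i))
      = ⋂ i, V i ⁻¹' Iic (a i) := by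
    ext ω; simp [Set.mem_pi, Pi.le_def]
  have hpreW : (fun ω i => W i ω) ⁻¹' (univ.pi fun i => Iic (a i))
      = ⋂ i, W i ⁻¹' Iic (a i) := by
    ext ω; simp [Set.mem_pi, Pi.le_def]
  rw [Measure.map_apply hVm hmeas, Measure.map_apply hWm hmeas, hpreV, hpreW]
  rw [hVind.meas_iInter (fun i => ⟨Iic (a i), measurableSet_Iic, rfl⟩),
    hWind.meas_iInter (fun i => ⟨Iic (a i), measurableSet_Iic, rfl⟩)]
  exact Finset.prod_congr rfl fun i _ => hmarg i (a i)

end Helpers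

theorem rank_distribution_lehmann_alternative
    {Ω Ω' : Type*} [MeasurableSpace Ω] [MeasurableSpace Ω']
    (ℙ : Measure Ω) [IsProbabilityMeasure ℙ]
    (ℙ' : Measure Ω') [IsProbabilityMeasure ℙ']
    (m n : ℕ)
    (F K : ℝ → ℝ)
    (hFmono : Monotone F) (hFcont : Continuous F)
    (hFbot : Tendsto F atBot (nhds 0)) (hFtop : Tendsto F atTop (nhds 1))
    (hKmono : Monotone K) (hKcont : Continuous K)
    (hK0 : ∀ v ≤ (0 : ℝ), K v = 0) (hK1 : ∀ v, (1 : ℝ) ≤ v → K v = 1)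
    -- the sample under the alternative (F, K ∘ F)
    (Z : Fin (m + n) → Ω → ℝ) (hZmeas : ∀ i, Measurable (Z i))
    (hZindep : ProbabilityTheory.iIndepFun
      (m := fun _ : Fin (m + n) => (inferInstance : MeasurableSpace ℝ)) Z ℙ)
    (hZX : ∀ i : Fin m, ∀ x,
      ℙ {ω | Z (Fin.castAdd n i) ω ≤ x} = ENNReal.ofReal (F x))
    (hZY : ∀ j : Fin n, ∀ x,
      ℙ {ω | Z (Fin.natAdd m j) ω ≤ x} = ENNReal.ofReal (K (F x)))
    -- the sample under the alternative (U, K)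
    (W : Fin (m + n) → Ω' → ℝ) (hWmeas : ∀ i, Measurable (W i))
    (hWindep : ProbabilityTheory.iIndepFun
      (m := fun _ : Fin (m + n) => (inferInstance : MeasurableSpace ℝ)) W ℙ')
    (hWX : ∀ i : Fin m, ∀ x,
      ℙ' {ω | W (Fin.castAdd n i) ω ≤ x} = ENNReal.ofReal (max 0 (min x 1)))
    (hWY : ∀ j : Fin n, ∀ x,
      ℙ' {ω | W (Fin.natAdd m j) ω ≤ x} = ENNReal.ofReal (K x))
    (k : ℕ → ℝ) :
    (∀ r : Fin n → ℕ,
      ℙ {ω | ∀ j : Fin n, rank (fun i => Z i ω) (Fin.natAdd m j) = r j}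
        = ℙ' {ω | ∀ j : Fin n, rank (fun i => W i ω) (Fin.natAdd m j) = r j}) ∧
    (∀ t : ℝ,
      ℙ {ω | t ≤ ∑ j : Fin n, k (rank (fun i => Z i ω) (Fin.natAdd m j))}
        = ℙ' {ω | t ≤ ∑ j : Fin n, k (rank (fun i => W i ω) (Fin.natAdd m j))}) := by
  classical
  set V : Fin (m + n) → Ω → ℝ := fun i ω => F (Z i ω) with hV
  have hVmeas : ∀ i, Measurable (V i) := fun i => hFcont.measurable.comp (hZmeas i)
  have hVind : ProbabilityTheory.iIndepFun
      (m := fun _ : Fin (m + n) => (inferInstance : MeasurableSpace ℝ)) V ℙ :=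
    hZindep.comp (fun _ => F) (fun _ => hFcont.measurable)
  have hK00 : K 0 = 0 := hK0 0 le_rfl
  have hK11 : K 1 = 1 := hK1 1 le_rfl
  have hKclamp : ∀ x : ℝ, K (max 0 (min x 1)) = K x := by
    intro x
    rcases le_or_gt x 0 with h | h
    · rw [min_eq_left (by linarith), max_eq_left h, hK00, hK0 x h]
    rcases le_or_gt 1 x with h1 | h1
    · rw [min_eq_right h1, max_eq_right zero_le_one, hK11, hK1 x h1]
    · rw [min_eq_left h1.le, max_eq_right h.le]
  -- marginals of V and W agree
  have hmarg : ∀ i x, ℙ {ω | V i ω ≤ x} = ℙ' {ω | W i ω ≤ x} := by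
    intro i
    induction i using Fin.addCases with
    | left i' =>
      intro x
      have h := key_cdf ℙ F id hFmono hFcont hFbot hFtop rfl rfl
        (Z (Fin.castAdd n i')) (hZX i') x
      rw [hWX i' x]
      exact h
    | right j' =>
      intro x
      have h := key_cdf ℙ F K hFmono hFcont hFbot hFtop hK00 hK11
        (Z (Fin.natAdd m j')) (hZY j') x
      rw [hWY j' x, ← hKclamp x]
      exact h
  -- cdf of each V i is continuous and nonneg
  have hcdf : ∀ i, ∃ g : ℝ → ℝ, Continuous g ∧ (∀ x, 0 ≤ g x) ∧
      ∀ x, ℙ {ω | V i ω ≤ x} = ENNReal.ofReal (g x) := by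
    intro i
    induction i using Fin.addCases with
    | left i' =>
      refine ⟨fun x => max 0 (min x 1), continuous_const.max (continuous_id.min
        continuous_const), fun x => le_max_left _ _, fun x => ?_⟩
      exact key_cdf ℙ F id hFmono hFcont hFbot hFtop rfl rfl
        (Z (Fin.castAdd n i')) (hZX i') x
    | right j' =>
      refine ⟨fun x => K (max 0 (min x 1)), hKcont.comp (continuous_const.max
        (continuous_id.min continuous_const)), fun x => le_trans (le_of_eq hK00.symm) (hKmono (le_max_left _ _)),
        fun x => ?_⟩
      exact key_cdf ℙ F K hFmono hFcont hFbot hFtop hK00 hK11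
        (Z (Fin.natAdd m j')) (hZY j') x
  -- a.e. all values of V distinct
  have hae : ∀ᵐ ω ∂ℙ, ∀ i j : Fin (m + n), i ≠ j → V i ω ≠ V j ω := by
    rw [ae_all_iff]
    intro i
    rw [ae_all_iff]
    intro j
    by_cases hij : i = j
    · exact ae_of_all _ fun ω h => absurd hij h
    · obtain ⟨g, hgc, hg0, hgcdf⟩ := hcdf j
      haveI : IsProbabilityMeasure (ℙ.map (V j)) :=
        Measure.isProbabilityMeasure_map (hVmeas j).aemeasurable
      have hsing : ∀ a, (ℙ.map (V j)) {a} = 0 := by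
        intro a
        apply singleton_zero_of_cdf (ℙ.map (V j)) g hgc hg0
        intro x
        rw [Measure.map_apply (hVmeas j) measurableSet_Iic]
        exact hgcdf x
      have h0 := prob_eq_zero_of_indep ℙ (V i) (V j) (hVmeas i) (hVmeas j)
        (hVind.indepFun hij) hsing
      have : ∀ᵐ ω ∂ℙ, V i ω ≠ V j ω := by
        rw [ae_iff]
        simpa only [not_not] using h0
      exact this.mono fun ω h _ => h
  -- joint law equality
  have hjoint := joint_law_eq ℙ ℙ' (m + n) V W hVmeas hWmeas hVind hWindep hmarg
  have hVm : Measurable (fun ω i => V i ω) := measurable_pi_lambda _ hVmeas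
  have hWm : Measurable (fun ω i => W i ω) := measurable_pi_lambda _ hWmeas
  -- all subsets of (Fin n → ℕ) are measurable
  have hallmeas : ∀ T : Set (Fin n → ℕ), MeasurableSet T := by
    intro T
    have hT : T = ⋃ g ∈ T, {g} := by simp
    rw [hT]
    refine MeasurableSet.biUnion (Set.to_countable T) fun g _ => ?_
    have hg : ({g} : Set (Fin n → ℕ)) = ⋂ j, (fun h : Fin n → ℕ => h j) ⁻¹' {g j} := by
      ext h; simp [funext_iff]
    rw [hg]
    exact MeasurableSet.iInter fun j => measurable_pi_apply j (measurableSet_singleton _)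
  -- main transfer principle
  have main : ∀ Φ : (Fin n → ℕ) → Prop,
      ℙ {ω | Φ (fun j => rank (fun i => Z i ω) (Fin.natAdd m j))}
        = ℙ' {ω | Φ (fun j => rank (fun i => W i ω) (Fin.natAdd m j))} := by
    intro Φ
    set S : Set (Fin (m + n) → ℝ) := {x | Φ (fun j => rank x (Fin.natAdd m j))} with hSdef
    have hSmeas : MeasurableSet S := by
      have : S = (fun x : Fin (m + n) → ℝ => fun j => rank x (Fin.natAdd m j)) ⁻¹'
          {g | Φ g} := rfl
      rw [this]
      exact (measurable_pi_lambda _ fun j => rank_measurable' (Fin.natAdd m j))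
        (hallmeas _)
    have h1 : ℙ {ω | Φ (fun j => rank (fun i => Z i ω) (Fin.natAdd m j))}
        = ℙ {ω | Φ (fun j => rank (fun i => V i ω) (Fin.natAdd m j))} := by
      apply measure_congr
      rw [eventuallyEq_set]
      filter_upwards [hae] with ω hω
      have hrk : ∀ i0, rank (fun i => V i ω) i0 = rank (fun i => Z i ω) i0 :=
        fun i0 => rank_invariance _ _ (fun i j h => hFmono h) (fun i j h => hω i j h) i0
      have : (fun j => rank (fun i => V i ω) (Fin.natAdd m j))
          = (fun j => rank (fun i => Z i ω) (Fin.natAdd m j)) :=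
        funext fun j => hrk _
      simp only [mem_setOf_eq, this]
    calc ℙ {ω | Φ (fun j => rank (fun i => Z i ω) (Fin.natAdd m j))}
        = ℙ {ω | Φ (fun j => rank (fun i => V i ω) (Fin.natAdd m j))} := h1
      _ = (ℙ.map (fun ω i => V i ω)) S := by rw [Measure.map_apply hVm hSmeas]; rfl
      _ = (ℙ'.map (fun ω i => W i ω)) S := by rw [hjoint]
      _ = ℙ' {ω | Φ (fun j => rank (fun i => W i ω) (Fin.natAdd m j))} := by
          rw [Measure.map_apply hWm hSmeas]; rfl
  constructor
  · intro r
    exact main (fun g => ∀ j, g j = r j)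
  · intro t
    exact main (fun g => t ≤ ∑ j, k (g j))
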